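/- For every graphon W, m(K₃, W) = 1/4 + 3·∫₀¹ h(x)² dx, where h(x) = ∫₀¹ W(x,y) dy − 1/2. In particular m(K₃, W) ≥ 1/4, i.e., the triangle is common. -/
import Mathlib
open MeasureTheory Function
noncomputable section

/-- a graphon: symmetric measurable `W` with values in `[0,1]`. -/
def IsGraphon (W : ℝ → ℝ → ℝ) : Prop :=
  Measurable (Function.uncurry W) ∧ (∀ x y, W x y = W y x) ∧ ∀ x y, W x y ∈ Set.Icc (0:ℝ) 1

/-- the complementary graphon `1 - W`. -/
def cW (W : ℝ → ℝ → ℝ) : ℝ → ℝ → ℝ := fun x y => 1 - W x y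

/-- homomorphism density of the star `S_k` with `k` leaves. -/
def tS (k : ℕ) (W : ℝ → ℝ → ℝ) : ℝ :=
  ∫ x in Set.Icc (0:ℝ) 1, (∫ y in Set.Icc (0:ℝ) 1, W x y) ^ k

/-- monochromatic density of `S_k`. -/
def mS (k : ℕ) (W : ℝ → ℝ → ℝ) : ℝ := tS k W + tS k (cW W)

/-- homomorphism density of the triangular book `T_k = K_{1,1,k}`. -/
def tT (k : ℕ) (W : ℝ → ℝ → ℝ) : ℝ :=
  ∫ x in Set.Icc (0:ℝ) 1, ∫ y in Set.Icc (0:ℝ) 1,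
    W x y * (∫ z in Set.Icc (0:ℝ) 1, W x z * W y z) ^ k

/-- monochromatic density of `T_k`. -/
def mT (k : ℕ) (W : ℝ → ℝ → ℝ) : ℝ := tT k W + tT k (cW W)

/-- homomorphism density of the triangle `K_3`. -/
def tK3 (W : ℝ → ℝ → ℝ) : ℝ :=
  ∫ x in Set.Icc (0:ℝ) 1, ∫ y in Set.Icc (0:ℝ) 1, ∫ z in Set.Icc (0:ℝ) 1,
    W x y * W y z * W x z

/-- monochromatic triangle density. -/
def mK3 (W : ℝ → ℝ → ℝ) : ℝ := tK3 W + tK3 (cW W)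

/-- the normalized degree function `h(x) = deg(x) - 1/2`. -/
def hdeg (W : ℝ → ℝ → ℝ) (x : ℝ) : ℝ := (∫ y in Set.Icc (0:ℝ) 1, W x y) - 1/2

namespace Stmt8Aux

def μ : Measure ℝ := volume.restrict (Set.Icc 0 1)

instance : IsProbabilityMeasure μ := ⟨by simp [μ, Real.volume_Icc]⟩

/-- bounded measurable functions are integrable wrt a probability measure -/
lemma int_bdd {α : Type*} [MeasurableSpace α] {ν : Measure α} [IsProbabilityMeasure ν]
    {f : α → ℝ} (hf : Measurable f) (h0 : ∀ x, 0 ≤ f x) (h1 : ∀ x, f x ≤ 1) :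
    Integrable f ν := by
  refine (integrable_const (1:ℝ)).mono' hf.aestronglyMeasurable ?_
  filter_upwards with x
  rw [Real.norm_eq_abs, abs_of_nonneg (h0 x)]; exact h1 x

lemma integral_bdd {α : Type*} [MeasurableSpace α] {ν : Measure α} [IsProbabilityMeasure ν]
    {f : α → ℝ} (hf : Measurable f) (h0 : ∀ x, 0 ≤ f x) (h1 : ∀ x, f x ≤ 1) :
    0 ≤ ∫ x, f x ∂ν ∧ ∫ x, f x ∂ν ≤ 1 := by
  constructor
  · exact integral_nonneg h0
  · calc ∫ x, f x ∂ν ≤ ∫ _, (1:ℝ) ∂ν := integral_mono (int_bdd hf h0 h1) (integrable_const 1) h1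
    _ = 1 := by simp

/-- swap lemma for bounded measurable kernels -/
lemma swap_bdd {F : ℝ → ℝ → ℝ} (hF : Measurable (uncurry F))
    (h0 : ∀ x y, 0 ≤ F x y) (h1 : ∀ x y, F x y ≤ 1) :
    ∫ x, ∫ y, F x y ∂μ ∂μ = ∫ y, ∫ x, F x y ∂μ ∂μ := by
  exact integral_integral_swap (int_bdd hF (fun p => h0 p.1 p.2) (fun p => h1 p.1 p.2))

lemma meas_int {α : Type*} [MeasurableSpace α] {F : α → ℝ → ℝ} (hF : Measurable (uncurry F)) :
    Measurable fun x => ∫ y, F x y ∂μ :=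
  (hF.stronglyMeasurable.integral_prod_right).measurable

section Main

variable {W : ℝ → ℝ → ℝ} (hm : Measurable (uncurry W))
  (hs : ∀ x y, W x y = W y x)
  (h0 : ∀ x y, 0 ≤ W x y) (h1 : ∀ x y, W x y ≤ 1)

lemma key (hm : Measurable (uncurry W)) (hs : ∀ x y, W x y = W y x)
    (h0 : ∀ x y, 0 ≤ W x y) (h1 : ∀ x y, W x y ≤ 1) :
    mK3 W = 1 - 3 * (∫ x, (∫ y, W x y ∂μ) ∂μ)
      + 3 * ∫ x, (∫ y, W x y ∂μ) * (∫ y, W x y ∂μ) ∂μ := by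
  set d : ℝ → ℝ := fun x => ∫ y, W x y ∂μ with hd_def
  have hWx : ∀ x, Measurable (W x) := fun x => hm.comp measurable_prodMk_left
  have hd_meas : Measurable d := meas_int hm
  have hd0 : ∀ x, 0 ≤ d x := fun x => integral_nonneg (h0 x)
  have hd1 : ∀ x, d x ≤ 1 := fun x => (integral_bdd (hWx x) (h0 x) (h1 x)).2
  have hWint : ∀ x, Integrable (W x) μ := fun x => int_bdd (hWx x) (h0 x) (h1 x)
  have hdsym : ∀ y, (∫ x, W x y ∂μ) = d y := by
    intro y
    have : (fun x => W x y) = W y := funext fun x => hs x y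
    rw [this]
  set c : ℝ → ℝ → ℝ := fun x y => ∫ z, W y z * W x z ∂μ with hc_def
  have hcsec : ∀ x y, Measurable fun z => W y z * W x z :=
    fun x y => (hWx y).mul (hWx x)
  have hcsec0 : ∀ x y z, 0 ≤ W y z * W x z := fun x y z => mul_nonneg (h0 y z) (h0 x z)
  have hcsec1 : ∀ x y z, W y z * W x z ≤ 1 := fun x y z =>
    mul_le_one₀ (h1 y z) (h0 x z) (h1 x z)
  have hc_unc : Measurable (uncurry c) := by
    apply meas_int (F := fun p : ℝ × ℝ => fun z => W p.2 z * W p.1 z)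
    exact (hm.comp ((measurable_fst.snd).prodMk measurable_snd)).mul
      (hm.comp ((measurable_fst.fst).prodMk measurable_snd))
  have hc0 : ∀ x y, 0 ≤ c x y := fun x y => integral_nonneg (hcsec0 x y)
  have hc1 : ∀ x y, c x y ≤ 1 := fun x y =>
    (integral_bdd (hcsec x y) (hcsec0 x y) (hcsec1 x y)).2
  have hcx : ∀ x, Measurable (c x) := fun x => hc_unc.comp measurable_prodMk_left
  -- innermost z-integrals
  have hinner2 : ∀ x y, ∫ z, (1 - W y z) * (1 - W x z) ∂μ = 1 - d y - d x + c x y := by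
    intro x y
    have e : ∀ z, (1 - W y z) * (1 - W x z) = (1 - W y z - W x z) + W y z * W x z := by
      intro z; ring
    simp only [e]
    have i1 : Integrable (fun z => 1 - W y z - W x z) μ :=
      ((integrable_const 1).sub (hWint y)).sub (hWint x)
    have i1' : Integrable (fun z => (1:ℝ) - W y z) μ := (integrable_const 1).sub (hWint y)
    rw [integral_add i1 (int_bdd (hcsec x y) (hcsec0 x y) (hcsec1 x y)),
      integral_sub i1' (hWint x),
      integral_sub (integrable_const 1) (hWint y)]
    simp [hd_def, hc_def]
  have hinnerW : ∀ x y, ∫ z, W x y * W y z * W x z ∂μ = W x y * c x y := by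
    intro x y
    have e : ∀ z, W x y * W y z * W x z = W x y * (W y z * W x z) := fun z => mul_assoc _ _ _
    simp only [e]
    rw [integral_const_mul]
  -- middle y-integrals
  set e : ℝ := ∫ x, d x ∂μ with he_def
  set k : ℝ → ℝ := fun x => ∫ y, c x y ∂μ with hk_def
  set p : ℝ → ℝ := fun x => ∫ y, W x y * d y ∂μ with hp_def
  set q : ℝ → ℝ := fun x => ∫ y, W x y * c x y ∂μ with hq_def
  have hd_int : Integrable d μ := int_bdd hd_meas hd0 hd1
  have hmid : ∀ x, ∫ y, (1 - W x y) * (1 - d y - d x + c x y) ∂μ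
      = (1 - e - d x + k x) - (d x - p x - d x * d x + q x) := by
    intro x
    have iW := hWint x
    have ic : Integrable (c x) μ := int_bdd (hcx x) (hc0 x) (hc1 x)
    have iWd : Integrable (fun y => W x y * d y) μ :=
      int_bdd ((hWx x).mul hd_meas) (fun y => mul_nonneg (h0 x y) (hd0 y))
        (fun y => mul_le_one₀ (h1 x y) (hd0 y) (hd1 y))
    have iWdx : Integrable (fun y => W x y * d x) μ := iW.mul_const (d x)
    have iWc : Integrable (fun y => W x y * c x y) μ :=
      int_bdd ((hWx x).mul (hcx x)) (fun y => mul_nonneg (h0 x y) (hc0 x y))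
        (fun y => mul_le_one₀ (h1 x y) (hc0 x y) (hc1 x y))
    have ee : ∀ y, (1 - W x y) * (1 - d y - d x + c x y)
        = ((1 - d y - d x) + c x y) - ((W x y - W x y * d y - W x y * d x) + W x y * c x y) := by
      intro y; ring
    simp only [ee]
    have iA1 : Integrable (fun y => 1 - d y - d x) μ :=
      ((integrable_const 1).sub hd_int).sub (integrable_const (d x))
    have iA2 : Integrable (fun y => (1:ℝ) - d y) μ := (integrable_const 1).sub hd_int
    have iA : Integrable (fun y => 1 - d y - d x + c x y) μ := iA1.add ic
    have iB2 : Integrable (fun y => W x y - W x y * d y) μ := iW.sub iWd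
    have iB1 : Integrable (fun y => W x y - W x y * d y - W x y * d x) μ := iB2.sub iWdx
    have iB : Integrable (fun y => W x y - W x y * d y - W x y * d x + W x y * c x y) μ :=
      iB1.add iWc
    rw [integral_sub iA iB,
      integral_add iA1 ic,
      integral_sub iA2 (integrable_const (d x)),
      integral_sub (integrable_const 1) hd_int,
      integral_add iB1 iWc,
      integral_sub iB2 iWdx,
      integral_sub iW iWd,
      integral_mul_const]
    simp [he_def, hk_def, hp_def, hq_def, hd_def]
  -- Fubini identities
  have hksec : ∀ x, k x = ∫ z, d z * W x z ∂μ := by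
    intro x
    have hswap : ∫ y, ∫ z, W y z * W x z ∂μ ∂μ = ∫ z, ∫ y, W y z * W x z ∂μ ∂μ := by
      apply swap_bdd (F := fun y z => W y z * W x z)
      · exact hm.mul ((hWx x).comp measurable_snd)
      · exact fun y z => hcsec0 x y z
      · exact fun y z => hcsec1 x y z
    rw [hk_def]
    simp only []
    rw [hswap]
    congr 1
    funext z
    rw [integral_mul_const, hdsym]
  have hI2 : ∀ x, 0 ≤ d x * d x ∧ d x * d x ≤ 1 := fun x =>
    ⟨mul_nonneg (hd0 x) (hd0 x), mul_le_one₀ (hd1 x) (hd0 x) (hd1 x)⟩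
  have hk_int : ∫ x, k x ∂μ = ∫ z, d z * d z ∂μ := by
    have hswap : ∫ x, ∫ z, d z * W x z ∂μ ∂μ = ∫ z, ∫ x, d z * W x z ∂μ ∂μ := by
      apply swap_bdd (F := fun x z => d z * W x z)
      · exact (hd_meas.comp measurable_snd).mul hm
      · exact fun x z => mul_nonneg (hd0 z) (h0 x z)
      · exact fun x z => mul_le_one₀ (hd1 z) (h0 x z) (h1 x z)
    calc ∫ x, k x ∂μ = ∫ x, ∫ z, d z * W x z ∂μ ∂μ := by
          congr 1; funext x; exact hksec x
      _ = ∫ z, ∫ x, d z * W x z ∂μ ∂μ := hswap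
      _ = ∫ z, d z * d z ∂μ := by
          congr 1; funext z; rw [integral_const_mul, hdsym]
  have hp_int : ∫ x, p x ∂μ = ∫ y, d y * d y ∂μ := by
    have hswap : ∫ x, ∫ y, W x y * d y ∂μ ∂μ = ∫ y, ∫ x, W x y * d y ∂μ ∂μ := by
      apply swap_bdd (F := fun x y => W x y * d y)
      · exact hm.mul (hd_meas.comp measurable_snd)
      · exact fun x y => mul_nonneg (h0 x y) (hd0 y)
      · exact fun x y => mul_le_one₀ (h1 x y) (hd0 y) (hd1 y)
    calc ∫ x, p x ∂μ = ∫ y, ∫ x, W x y * d y ∂μ ∂μ := hswap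
      _ = ∫ y, d y * d y ∂μ := by
          congr 1; funext y
          rw [integral_mul_const, hdsym]
  have hq_tK3 : tK3 W = ∫ x, q x ∂μ := by
    show (∫ x, ∫ y, ∫ z, W x y * W y z * W x z ∂μ ∂μ ∂μ) = _
    congr 1; funext x; congr 1; funext y
    exact hinnerW x y
  -- measurability / integrability in x
  have hk_meas : Measurable k := meas_int hc_unc
  have hk0 : ∀ x, 0 ≤ k x := fun x => integral_nonneg (hc0 x)
  have hk1 : ∀ x, k x ≤ 1 := fun x => (integral_bdd (hcx x) (hc0 x) (hc1 x)).2
  have hk_intg : Integrable k μ := int_bdd hk_meas hk0 hk1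
  have hp_meas : Measurable p := meas_int (hm.mul (hd_meas.comp measurable_snd))
  have hp_intg : Integrable p μ := int_bdd hp_meas
    (fun x => integral_nonneg fun y => mul_nonneg (h0 x y) (hd0 y))
    (fun x => (integral_bdd ((hWx x).mul hd_meas)
      (fun y => mul_nonneg (h0 x y) (hd0 y))
      (fun y => mul_le_one₀ (h1 x y) (hd0 y) (hd1 y))).2)
  have hq_meas : Measurable q := meas_int (hm.mul hc_unc)
  have hq_intg : Integrable q μ := int_bdd hq_meas
    (fun x => integral_nonneg fun y => mul_nonneg (h0 x y) (hc0 x y))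
    (fun x => (integral_bdd ((hWx x).mul (hcx x))
      (fun y => mul_nonneg (h0 x y) (hc0 x y))
      (fun y => mul_le_one₀ (h1 x y) (hc0 x y) (hc1 x y))).2)
  have hdd_intg : Integrable (fun x => d x * d x) μ :=
    int_bdd (hd_meas.mul hd_meas) (fun x => (hI2 x).1) (fun x => (hI2 x).2)
  -- compute tK3 (cW W)
  have htcw : tK3 (cW W) = (1 - e - e + ∫ x, k x ∂μ)
      - (e - (∫ x, p x ∂μ) - (∫ x, d x * d x ∂μ) + ∫ x, q x ∂μ) := by
    have step1 : tK3 (cW W)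
        = ∫ x, ∫ y, (1 - W x y) * (1 - d y - d x + c x y) ∂μ ∂μ := by
      show (∫ x, ∫ y, ∫ z, (1 - W x y) * (1 - W y z) * ((1:ℝ) - W x z) ∂μ ∂μ ∂μ) = _
      congr 1; funext x; congr 1; funext y
      have e' : ∀ z, (1 - W x y) * (1 - W y z) * (1 - W x z)
          = (1 - W x y) * ((1 - W y z) * (1 - W x z)) := fun z => by ring
      simp only [e']
      rw [integral_const_mul, hinner2]
    rw [step1]
    have step2 : ∫ x, ∫ y, (1 - W x y) * (1 - d y - d x + c x y) ∂μ ∂μ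
        = ∫ x, ((1 - e - d x + k x) - (d x - p x - d x * d x + q x)) ∂μ := by
      congr 1; funext x; exact hmid x
    rw [step2]
    have jA2 : Integrable (fun x => (1:ℝ) - e) μ := (integrable_const 1).sub (integrable_const e)
    have jA1 : Integrable (fun x => 1 - e - d x) μ := jA2.sub hd_int
    have jA : Integrable (fun x => 1 - e - d x + k x) μ := jA1.add hk_intg
    have jB2 : Integrable (fun x => d x - p x) μ := hd_int.sub hp_intg
    have jB1 : Integrable (fun x => d x - p x - d x * d x) μ := jB2.sub hdd_intg
    have jB : Integrable (fun x => d x - p x - d x * d x + q x) μ := jB1.add hq_intg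
    rw [integral_sub jA jB,
      integral_add jA1 hk_intg,
      integral_sub jA2 hd_int,
      integral_sub (integrable_const 1) (integrable_const e),
      integral_add jB1 hq_intg,
      integral_sub jB2 hdd_intg,
      integral_sub hd_int hp_intg]
    simp [he_def]
  have : mK3 W = tK3 W + tK3 (cW W) := rfl
  have c1 : (∫ x, (∫ y, W x y ∂μ) * ∫ y, W x y ∂μ ∂μ) = ∫ x, d x * d x ∂μ := rfl
  rw [this, htcw, hk_int, hp_int, hq_tK3, c1]
  ring

end Main

end Stmt8Aux

/-- `m(K₃,W) = 1/4 + 3∫h²`; in particular `m(K₃,W) ≥ 1/4`,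
i.e. the triangle is common. -/
theorem stmt8 (W : ℝ → ℝ → ℝ) (hW : IsGraphon W) :
    (mK3 W = 1/4 + 3 * ∫ x in Set.Icc (0:ℝ) 1, hdeg W x ^ 2) ∧ mK3 W ≥ 1/4 := by
  obtain ⟨hm, hs, hb⟩ := hW
  have h0 : ∀ x y, 0 ≤ W x y := fun x y => (hb x y).1
  have h1 : ∀ x y, W x y ≤ 1 := fun x y => (hb x y).2
  have hkey := Stmt8Aux.key hm hs h0 h1
  have hWx : ∀ x, Measurable (W x) := fun x => hm.comp measurable_prodMk_left
  have hd_meas : Measurable (fun x => ∫ y, W x y ∂Stmt8Aux.μ) := Stmt8Aux.meas_int hm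
  have hd0 : ∀ x, 0 ≤ ∫ y, W x y ∂Stmt8Aux.μ := fun x => integral_nonneg (h0 x)
  have hd1 : ∀ x, (∫ y, W x y ∂Stmt8Aux.μ) ≤ 1 :=
    fun x => (Stmt8Aux.integral_bdd (hWx x) (h0 x) (h1 x)).2
  have hd_int : Integrable (fun x => ∫ y, W x y ∂Stmt8Aux.μ) Stmt8Aux.μ :=
    Stmt8Aux.int_bdd hd_meas hd0 hd1
  have hdd_int : Integrable
      (fun x => (∫ y, W x y ∂Stmt8Aux.μ) * ∫ y, W x y ∂Stmt8Aux.μ) Stmt8Aux.μ :=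
    Stmt8Aux.int_bdd (hd_meas.mul hd_meas)
      (fun x => mul_nonneg (hd0 x) (hd0 x))
      (fun x => mul_le_one₀ (hd1 x) (hd0 x) (hd1 x))
  have hh : (∫ x in Set.Icc (0:ℝ) 1, hdeg W x ^ 2)
      = (∫ x, (∫ y, W x y ∂Stmt8Aux.μ) * ∫ y, W x y ∂Stmt8Aux.μ ∂Stmt8Aux.μ)
        - (∫ x, (∫ y, W x y ∂Stmt8Aux.μ) ∂Stmt8Aux.μ) + 1/4 := by
    show (∫ x, ((∫ y, W x y ∂Stmt8Aux.μ) - 1/2) ^ 2 ∂Stmt8Aux.μ) = _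
    have e : ∀ x : ℝ, ((∫ y, W x y ∂Stmt8Aux.μ) - 1/2) ^ 2
        = ((∫ y, W x y ∂Stmt8Aux.μ) * (∫ y, W x y ∂Stmt8Aux.μ)
          - ∫ y, W x y ∂Stmt8Aux.μ) + 1/4 := fun x => by ring
    simp only [e]
    have i : Integrable (fun x => (∫ y, W x y ∂Stmt8Aux.μ) * (∫ y, W x y ∂Stmt8Aux.μ)
        - ∫ y, W x y ∂Stmt8Aux.μ) Stmt8Aux.μ := hdd_int.sub hd_int
    rw [integral_add i (integrable_const _), integral_sub hdd_int hd_int]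
    simp
  have heq : mK3 W = 1/4 + 3 * ∫ x in Set.Icc (0:ℝ) 1, hdeg W x ^ 2 := by
    rw [hh, hkey]; ring
  refine ⟨heq, ?_⟩
  rw [heq]
  have : 0 ≤ ∫ x in Set.Icc (0:ℝ) 1, hdeg W x ^ 2 :=
    integral_nonneg fun x => sq_nonneg _
  linarith
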